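/- Let G be a group with subgroups I, A, N, N̄ such that: A is abelian; A normalizes N and N̄ (so that B := A·N is a subgroup of G); I admits the Iwahori decomposition I = (I∩N)·(I∩A)·(I∩N̄) as a product of sets. Let a ∈ A be dominant, i.e., a(I∩N)a⁻¹ ⊆ I∩N and a⁻¹(I∩N̄)a ⊆ I∩N̄. Then (I∩N) ∩ aIa⁻¹ = a(I∩N)a⁻¹, and the inclusion I∩N ↪ I induces a bijection from the left coset space (I∩N)/(a(I∩N)a⁻¹) onto the left coset space I/(I ∩ aIa⁻¹); in particular the indices agree: [I : I ∩ aIa⁻¹] = [I∩N : a(I∩N)a⁻¹]. -/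

import Mathlib

open Pointwise

/-- `G` a group with subgroups `I, A, N, N̄`; `A` abelian, normalizing
`N` and `N̄`; `I` has an Iwahori decomposition `I = (I∩N)(I∩A)(I∩N̄)`.
For `a ∈ A` dominant:
1. `(I∩N) ∩ aIa⁻¹ = a(I∩N)a⁻¹` as subsets of `G`;
2. every left coset of `I ∩ aIa⁻¹` in `I` meets `I∩N` (the map induced by inclusion
   on left coset spaces `(I∩N)/(a(I∩N)a⁻¹) → I/(I ∩ aIa⁻¹)` is surjective);
3. two elements of `I∩N` in the same left coset of `I ∩ aIa⁻¹` lie in the same left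
   coset of `a(I∩N)a⁻¹` (the induced map is injective);
4. the indices agree: `[I : I ∩ aIa⁻¹] = [I∩N : a(I∩N)a⁻¹]`. -/
theorem stmt7 {G : Type*} [Group G] (I A N Nbar : Subgroup G)
    (hAcomm : ∀ x ∈ A, ∀ y ∈ A, x * y = y * x)
    (hAN : ∀ x ∈ A, ∀ n ∈ N, x * n * x⁻¹ ∈ N)
    (hANbar : ∀ x ∈ A, ∀ n ∈ Nbar, x * n * x⁻¹ ∈ Nbar)
    (hIwa : (I : Set G) =
      ((I : Set G) ∩ (N : Set G)) * ((I : Set G) ∩ (A : Set G)) *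
        ((I : Set G) ∩ (Nbar : Set G)))
    (a : G) (ha : a ∈ A)
    (hdomN : ∀ x ∈ (I : Set G) ∩ (N : Set G), a * x * a⁻¹ ∈ (I : Set G) ∩ (N : Set G))
    (hdomNbar : ∀ x ∈ (I : Set G) ∩ (Nbar : Set G),
      a⁻¹ * x * a ∈ (I : Set G) ∩ (Nbar : Set G))
    -- `aIa⁻¹` and `a(I∩N)a⁻¹` as subgroups of `G`:
    (aIa : Subgroup G) (haIa : aIa = Subgroup.map (MulAut.conj a).toMonoidHom I)
    (aINa : Subgroup G) (haINa : aINa = Subgroup.map (MulAut.conj a).toMonoidHom (I ⊓ N)) :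
    ((I ⊓ N : Subgroup G) : Set G) ∩ ((aIa : Subgroup G) : Set G) = ((aINa : Subgroup G) : Set G)
    ∧ (∀ g ∈ I, ∃ n ∈ I ⊓ N, n⁻¹ * g ∈ I ⊓ aIa)
    ∧ (∀ n₁ ∈ I ⊓ N, ∀ n₂ ∈ I ⊓ N, n₁⁻¹ * n₂ ∈ I ⊓ aIa → n₁⁻¹ * n₂ ∈ aINa)
    ∧ (I ⊓ aIa).relIndex I = aINa.relIndex (I ⊓ N) := by

  have mem_aIa : ∀ x : G, x ∈ aIa ↔ a⁻¹ * x * a ∈ I := by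
    intro x
    rw [haIa]
    constructor
    · rintro ⟨i, hi, rfl⟩
      simpa [MulAut.conj_apply, mul_assoc] using hi
    · intro h
      exact ⟨a⁻¹ * x * a, h, by simp [MulAut.conj_apply, mul_assoc]⟩
  have mem_aINa : ∀ x : G, x ∈ aINa ↔ a⁻¹ * x * a ∈ I ⊓ N := by
    intro x
    rw [haINa]
    constructor
    · rintro ⟨i, hi, rfl⟩
      simpa [MulAut.conj_apply, mul_assoc] using hi
    · intro h
      exact ⟨a⁻¹ * x * a, h, by simp [MulAut.conj_apply, mul_assoc]⟩
  -- Claim 1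
  have claim1 : ((I ⊓ N : Subgroup G) : Set G) ∩ ((aIa : Subgroup G) : Set G)
      = ((aINa : Subgroup G) : Set G) := by
    ext x
    simp only [Set.mem_inter_iff, SetLike.mem_coe, Subgroup.mem_inf, mem_aIa, mem_aINa]
    constructor
    · rintro ⟨⟨hxI, hxN⟩, hxa⟩
      refine ⟨hxa, ?_⟩
      have := hAN a⁻¹ (inv_mem ha) x hxN
      simpa using this
    · rintro ⟨hxI, hxN⟩
      have hx : a * (a⁻¹ * x * a) * a⁻¹ ∈ (I : Set G) ∩ (N : Set G) := by
        refine hdomN _ ⟨?_, ?_⟩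
        · exact hxI
        · exact hxN
      have hxe : a * (a⁻¹ * x * a) * a⁻¹ = x := by group
      rw [hxe] at hx
      exact ⟨⟨hx.1, hx.2⟩, hxI⟩
  -- Claim 2
  have claim2 : ∀ g ∈ I, ∃ n ∈ I ⊓ N, n⁻¹ * g ∈ I ⊓ aIa := by
    intro g hg
    have hg' : g ∈ ((I : Set G) ∩ (N : Set G)) * ((I : Set G) ∩ (A : Set G)) *
        ((I : Set G) ∩ (Nbar : Set G)) := by rw [← hIwa]; exact hg
    obtain ⟨nt, hnt, m, hm, rfl⟩ := hg'
    obtain ⟨n, hn, t, ht, rfl⟩ := hnt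
    refine ⟨n, ⟨hn.1, hn.2⟩, ?_⟩
    have he : n⁻¹ * (n * t * m) = t * m := by group
    rw [he]
    refine Subgroup.mem_inf.mpr ⟨mul_mem ht.1 hm.1, (mem_aIa _).mpr ?_⟩
    have hta : a⁻¹ * t * a = t := by
      have := hAcomm a ha t ht.2
      calc a⁻¹ * t * a = a⁻¹ * (t * a) := by rw [mul_assoc]
        _ = a⁻¹ * (a * t) := by rw [this]
        _ = t := by group
    have hma : a⁻¹ * m * a ∈ (I : Set G) ∩ (Nbar : Set G) := hdomNbar m hm
    have : a⁻¹ * (t * m) * a = (a⁻¹ * t * a) * (a⁻¹ * m * a) := by group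
    rw [this, hta]
    exact mul_mem ht.1 hma.1
  -- Claim 3
  have claim3 : ∀ n₁ ∈ I ⊓ N, ∀ n₂ ∈ I ⊓ N, n₁⁻¹ * n₂ ∈ I ⊓ aIa → n₁⁻¹ * n₂ ∈ aINa := by
    intro n₁ h₁ n₂ h₂ h
    have hx : (n₁⁻¹ * n₂) ∈ ((I ⊓ N : Subgroup G) : Set G) ∩ ((aIa : Subgroup G) : Set G) :=
      ⟨mul_mem (inv_mem h₁) h₂, h.2⟩
    rw [claim1] at hx
    exact hx
  refine ⟨claim1, claim2, claim3, ?_⟩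
  -- Claim 4
  have hle1 : aINa ≤ I ⊓ N := by
    intro x hx
    rw [mem_aINa] at hx
    have hx2 := hdomN _ ⟨hx.1, hx.2⟩
    have hxe : a * (a⁻¹ * x * a) * a⁻¹ = x := by group
    rw [hxe] at hx2
    exact ⟨hx2.1, hx2.2⟩
  have hle2 : aINa ≤ I ⊓ aIa := by
    intro x hx
    rw [mem_aINa] at hx
    exact Subgroup.mem_inf.mpr ⟨((Subgroup.mem_inf.mp (hle1 ((mem_aINa _).mpr hx)))).1,
      (mem_aIa _).mpr hx.1⟩
  have e : ((I ⊓ N : Subgroup G) ⧸ aINa.subgroupOf (I ⊓ N)) ≃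
      (I ⧸ (I ⊓ aIa).subgroupOf I) := by
    refine Equiv.ofBijective
      (Quotient.map' (Subgroup.inclusion inf_le_left) ?_) ⟨?_, ?_⟩
    · intro x y hxy
      rw [QuotientGroup.leftRel_apply] at hxy ⊢
      rw [Subgroup.mem_subgroupOf] at hxy ⊢
      exact hle2 hxy
    · intro x y
      induction x using Quotient.inductionOn'
      induction y using Quotient.inductionOn'
      rename_i x y
      intro hxy
      rw [Quotient.map'_mk'', Quotient.map'_mk''] at hxy
      have h := Quotient.exact' hxy
      rw [QuotientGroup.leftRel_apply, Subgroup.mem_subgroupOf] at h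
      refine Quotient.sound' ?_
      rw [QuotientGroup.leftRel_apply, Subgroup.mem_subgroupOf]
      exact claim3 _ x.2 _ y.2 h
    · intro q
      induction q using Quotient.inductionOn'
      rename_i g
      obtain ⟨n, hn, hng⟩ := claim2 g g.2
      refine ⟨Quotient.mk'' ⟨n, hn⟩, ?_⟩
      rw [Quotient.map'_mk'']
      refine Quotient.sound' ?_
      rw [QuotientGroup.leftRel_apply, Subgroup.mem_subgroupOf]
      exact hng
  have h1 : (I ⊓ aIa).relIndex I = Nat.card (I ⧸ (I ⊓ aIa).subgroupOf I) := rfl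
  have h2 : aINa.relIndex (I ⊓ N) =
      Nat.card ((I ⊓ N : Subgroup G) ⧸ aINa.subgroupOf (I ⊓ N)) := rfl
  rw [h1, h2, Nat.card_congr e.symm]
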